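/- Every cube tiling of ℝ³ contains a column; that is, if T ⊆ ℝ³ determines a cube tiling of ℝ³, then there exist s ∈ ℝ³ and a standard basis vector eᵢ of ℝ³ such that s + k·eᵢ ∈ T for every k ∈ ℤ. -/

import Mathlib

/-- The half-open unit cube `[0,1)ⁿ` translated by `t`. -/
def Cube {n : ℕ} (t : Fin n → ℝ) : Set (Fin n → ℝ) :=
  {x | ∀ j, t j ≤ x j ∧ x j < t j + 1}

/-- `T` determines a cube tiling of `ℝⁿ`: the cubes `[0,1)ⁿ + t`, `t ∈ T`,
are pairwise disjoint and their union is all of `ℝⁿ`. -/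
def IsCubeTiling {n : ℕ} (T : Set (Fin n → ℝ)) : Prop :=
  (∀ s ∈ T, ∀ t ∈ T, s ≠ t → Disjoint (Cube s) (Cube t)) ∧
  (⋃ t ∈ T, Cube t) = Set.univ

/-- `T ⊆ ℝ` determines a tiling of `ℝ` by unit intervals `[0,1) + t`. -/
def IsCubeTiling1 (T : Set ℝ) : Prop :=
  (∀ s ∈ T, ∀ t ∈ T, s ≠ t → Disjoint (Set.Ico s (s + 1)) (Set.Ico t (t + 1))) ∧
  (⋃ t ∈ T, Set.Ico t (t + 1)) = Set.univ

/-- The tiling determined by `T` contains a column: there are `s ∈ ℝⁿ` and a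
standard basis vector `eᵢ` such that `s + k·eᵢ ∈ T` for every `k ∈ ℤ`. -/
def ContainsColumn {n : ℕ} (T : Set (Fin n → ℝ)) : Prop :=
  ∃ s : Fin n → ℝ, ∃ i : Fin n, ∀ k : ℤ, (s + (k : ℝ) • (Pi.single i 1 : Fin n → ℝ)) ∈ T

/-- A natural code of `ℝⁿ`: each `ε j : ℝ → ℕ⁺` restricts to a bijection from
every coset `x + ℤ` onto the positive integers. -/
def IsNaturalCode {n : ℕ} (ε : Fin n → ℝ → ℕ+) : Prop :=
  ∀ j : Fin n, ∀ x : ℝ, Set.BijOn (ε j) {y : ℝ | ∃ m : ℤ, y = x + m} Set.univ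

namespace ColAux

variable {T : Set (Fin 3 → ℝ)}

lemma tiling_exists (hT : IsCubeTiling T) (x : Fin 3 → ℝ) : ∃ t ∈ T, x ∈ Cube t := by
  have hx : x ∈ (⋃ t ∈ T, Cube t) := hT.2 ▸ Set.mem_univ x
  simpa using hx

lemma tiling_unique (hT : IsCubeTiling T) {s t x : Fin 3 → ℝ} (hs : s ∈ T) (ht : t ∈ T)
    (hxs : x ∈ Cube s) (hxt : x ∈ Cube t) : s = t := by
  by_contra h
  exact Set.disjoint_left.mp (hT.1 s hs t ht h) hxs hxt

lemma eq_of_close (hT : IsCubeTiling T) {s t : Fin 3 → ℝ} (hs : s ∈ T) (ht : t ∈ T)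
    (h : ∀ l, |s l - t l| < 1) : s = t := by
  have hmem : ∀ l, (s l ≤ max (s l) (t l) ∧ max (s l) (t l) < s l + 1)
      ∧ (t l ≤ max (s l) (t l) ∧ max (s l) (t l) < t l + 1) := by
    intro l
    have := abs_sub_lt_iff.mp (h l)
    constructor <;> constructor
    · exact le_max_left _ _
    · exact max_lt (by linarith) (by linarith)
    · exact le_max_right _ _
    · exact max_lt (by linarith) (by linarith)
  exact tiling_unique hT hs ht (fun l => (hmem l).1) (fun l => (hmem l).2)

/-- The family of tiles meeting the line through `x` in direction `i`, with side data `σ`: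
for `σ j = true` the tile's `j`-interval contains `x j`; for `σ j = false` it contains
`x j` "from below" (i.e. `x j` is in the half-open interval `(t j, t j + 1]`). -/
def Fam (T : Set (Fin 3 → ℝ)) (i : Fin 3) (x : Fin 3 → ℝ) (σ : Fin 3 → Bool) :
    Set (Fin 3 → ℝ) :=
  {t | t ∈ T ∧ ∀ j, j ≠ i →
    (if σ j = true then t j ≤ x j ∧ x j < t j + 1 else t j < x j ∧ x j ≤ t j + 1)}

lemma fam_subset {i x σ} : Fam T i x σ ⊆ T := fun _ h => h.1

lemma fam_close {i x σ} {s t : Fin 3 → ℝ} (hs : s ∈ Fam T i x σ) (ht : t ∈ Fam T i x σ) :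
    ∀ l, l ≠ i → |s l - t l| < 1 := by
  intro l hl
  have h1 := hs.2 l hl
  have h2 := ht.2 l hl
  rw [abs_sub_lt_iff]
  cases hb : σ l <;> simp [hb] at h1 h2 <;>
    exact ⟨by linarith [h1.1, h1.2, h2.1, h2.2], by linarith [h1.1, h1.2, h2.1, h2.2]⟩


section AllPlus

variable {i : Fin 3} {x : Fin 3 → ℝ} {σ : Fin 3 → Bool}

lemma allplus_cover (hT : IsCubeTiling T) (hσ : ∀ j, j ≠ i → σ j = true) (y : ℝ) :
    ∃ t ∈ Fam T i x σ, t i ≤ y ∧ y < t i + 1 := by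
  obtain ⟨t, htT, hcov⟩ := tiling_exists hT (Function.update x i y)
  refine ⟨t, ⟨htT, ?_⟩, ?_⟩
  · intro j hj
    rw [if_pos (hσ j hj)]
    have := hcov j
    rwa [Function.update_of_ne hj] at this
  · have := hcov i
    rwa [Function.update_self] at this

lemma allplus_up (hT : IsCubeTiling T) (hσ : ∀ j, j ≠ i → σ j = true) {t : Fin 3 → ℝ}
    (ht : t ∈ Fam T i x σ) : ∃ u ∈ Fam T i x σ, u i = t i + 1 := by
  obtain ⟨u, hu, hui⟩ := allplus_cover hT hσ (y := t i + 1) (x := x)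
  refine ⟨u, hu, ?_⟩
  by_contra hne
  have h1 : u i < t i + 1 := lt_of_le_of_ne hui.1 hne
  have h2 : t i < u i := by linarith [hui.2]
  have heq : u = t := by
    apply eq_of_close hT (fam_subset hu) (fam_subset ht)
    intro l
    by_cases hl : l = i
    · subst hl; rw [abs_sub_lt_iff]; constructor <;> linarith
    · exact fam_close hu ht l hl
  rw [heq] at h2; linarith

lemma allplus_down (hT : IsCubeTiling T) (hσ : ∀ j, j ≠ i → σ j = true) {t : Fin 3 → ℝ}
    (ht : t ∈ Fam T i x σ) : ∃ u ∈ Fam T i x σ, u i = t i - 1 := by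
  obtain ⟨u, hu, hui⟩ := allplus_cover hT hσ (y := t i - 2⁻¹) (x := x)
  have hle : u i ≤ t i - 1 := by
    by_contra hgt
    push_neg at hgt
    have heq : u = t := by
      apply eq_of_close hT (fam_subset hu) (fam_subset ht)
      intro l
      by_cases hl : l = i
      · subst hl; rw [abs_sub_lt_iff]; constructor <;> linarith [hui.1, hui.2]
      · exact fam_close hu ht l hl
    rw [heq] at hui; linarith [hui.1]
  obtain ⟨w, hw, hwi⟩ := allplus_up hT hσ hu
  have hwt : w = t := by
    apply eq_of_close hT (fam_subset hw) (fam_subset ht)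
    intro l
    by_cases hl : l = i
    · subst hl; rw [abs_sub_lt_iff]
      constructor <;> [linarith [hui.1]; linarith [hui.2]]
    · exact fam_close hw ht l hl
  refine ⟨u, hu, ?_⟩
  have : t i = u i + 1 := by rw [← hwt, hwi]
  linarith

lemma allplus_corner (hT : IsCubeTiling T) (hσ : ∀ j, j ≠ i → σ j = true) {t : Fin 3 → ℝ}
    (ht : t ∈ Fam T i x σ) (m : ℤ) : ∃ u ∈ Fam T i x σ, u i = t i + m := by
  induction m using Int.induction_on with
  | zero => exact ⟨t, ht, by simp⟩
  | succ n ih =>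
    obtain ⟨u, hu, hui⟩ := ih
    obtain ⟨w, hw, hwi⟩ := allplus_up hT hσ hu
    exact ⟨w, hw, by rw [hwi, hui]; push_cast; ring⟩
  | pred n ih =>
    obtain ⟨u, hu, hui⟩ := ih
    obtain ⟨w, hw, hwi⟩ := allplus_down hT hσ hu
    exact ⟨w, hw, by rw [hwi, hui]; push_cast; ring⟩

lemma allplus_phase (hT : IsCubeTiling T) (hσ : ∀ j, j ≠ i → σ j = true) {s t : Fin 3 → ℝ}
    (hs : s ∈ Fam T i x σ) (ht : t ∈ Fam T i x σ) : ∃ m : ℤ, t i = s i + m := by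
  obtain ⟨u, hu, hui⟩ := allplus_corner hT hσ hs ⌊t i - s i⌋
  have h1 : (⌊t i - s i⌋ : ℝ) ≤ t i - s i := Int.floor_le _
  have h2 : t i - s i < ⌊t i - s i⌋ + 1 := Int.lt_floor_add_one _
  have heq : u = t := by
    apply eq_of_close hT (fam_subset hu) (fam_subset ht)
    intro l
    by_cases hl : l = i
    · subst hl; rw [abs_sub_lt_iff]; constructor <;> [linarith; linarith]
    · exact fam_close hu ht l hl
  rw [heq] at hui
  exact ⟨⌊t i - s i⌋, hui⟩

end AllPlus


section Refl

/-- Reflection of a tile in the `j`-th coordinate. -/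
def reflAt (j : Fin 3) (t : Fin 3 → ℝ) : Fin 3 → ℝ := Function.update t j (-t j - 1)

lemma reflAt_same (j : Fin 3) (t : Fin 3 → ℝ) : reflAt j t j = -t j - 1 :=
  Function.update_self _ _ _

lemma reflAt_ne {j l : Fin 3} (h : l ≠ j) (t : Fin 3 → ℝ) : reflAt j t l = t l :=
  Function.update_of_ne h _ _

lemma reflAt_invol (j : Fin 3) (t : Fin 3 → ℝ) : reflAt j (reflAt j t) = t := by
  funext l
  by_cases h : l = j
  · subst h; rw [reflAt_same, reflAt_same]; ring
  · rw [reflAt_ne h, reflAt_ne h]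

lemma reflAt_inj (j : Fin 3) : Function.Injective (reflAt j) := by
  intro a b h
  have := congrArg (reflAt j) h
  rwa [reflAt_invol, reflAt_invol] at this

lemma disjoint_of_far {s t : Fin 3 → ℝ} {l : Fin 3} (h : 1 ≤ |s l - t l|) :
    Disjoint (Cube s) (Cube t) := by
  rw [Set.disjoint_left]
  intro x hxs hxt
  have h1 := hxs l
  have h2 := hxt l
  rw [le_abs] at h
  rcases h with h | h <;> simp only [Cube, Set.mem_setOf_eq] at * <;> linarith

lemma far_of_disjoint {s t : Fin 3 → ℝ} (h : Disjoint (Cube s) (Cube t)) :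
    ∃ l, 1 ≤ |s l - t l| := by
  by_contra hc
  push_neg at hc
  have hmem : (fun l => max (s l) (t l)) ∈ Cube s ∩ Cube t := by
    constructor <;> intro l <;>
      · have := abs_sub_lt_iff.mp (hc l)
        refine ⟨?_, max_lt (by linarith) (by linarith)⟩
        first | exact le_max_left _ _ | exact le_max_right _ _
  exact Set.disjoint_left.mp h hmem.1 hmem.2

lemma tiling_reflAt (hT : IsCubeTiling T) (j : Fin 3) : IsCubeTiling (reflAt j '' T) := by
  constructor
  · rintro _ ⟨s, hs, rfl⟩ _ ⟨t, ht, rfl⟩ hne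
    have hst : s ≠ t := fun h => hne (by rw [h])
    obtain ⟨l, hl⟩ := far_of_disjoint (hT.1 s hs t ht hst)
    apply disjoint_of_far (l := l)
    by_cases h : l = j
    · subst h; rw [reflAt_same, reflAt_same]
      rwa [show -s l - 1 - (-t l - 1) = -(s l - t l) by ring, abs_neg]
    · rwa [reflAt_ne h, reflAt_ne h]
  · rw [Set.eq_univ_iff_forall]
    intro y
    rw [Set.mem_iUnion₂]
    -- find a tile of T whose reflection covers y
    set x := Function.update y j (-y j) with hxdef
    obtain ⟨s, hsF, hsi⟩ := allplus_cover (σ := fun _ => true) (i := j) (x := x)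
        hT (fun _ _ => rfl) (-y j)
    -- s covers x with s j ≤ -y j < s j + 1 ; if s j = -y j take down-neighbour
    have key : ∃ t ∈ T, (t j < -y j ∧ -y j ≤ t j + 1) ∧
        ∀ l, l ≠ j → t l ≤ y l ∧ y l < t l + 1 := by
      have hylx : ∀ l, l ≠ j → x l = y l := fun l hl => Function.update_of_ne hl _ _
      by_cases hs0 : s j = -y j
      · obtain ⟨u, hu, hui⟩ := allplus_down (σ := fun _ => true) hT (fun _ _ => rfl) hsF
        refine ⟨u, fam_subset hu, ⟨by rw [hui, hs0]; linarith, by rw [hui, hs0]; linarith⟩, ?_⟩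
        intro l hl
        have := hu.2 l hl
        rw [if_pos rfl, hylx l hl] at this
        exact this
      · refine ⟨s, fam_subset hsF, ⟨lt_of_le_of_ne hsi.1 hs0, by linarith [hsi.2]⟩, ?_⟩
        intro l hl
        have := hsF.2 l hl
        rw [if_pos rfl, hylx l hl] at this
        exact this
    obtain ⟨t, htT, htj, htl⟩ := key
    refine ⟨reflAt j t, Set.mem_image_of_mem _ htT, ?_⟩
    intro l
    by_cases h : l = j
    · subst h
      rw [reflAt_same]
      constructor <;> linarith [htj.1, htj.2]
    · rw [reflAt_ne h]
      exact htl l h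

lemma mem_fam_reflAt {i j : Fin 3} (hji : j ≠ i) {x : Fin 3 → ℝ} {σ : Fin 3 → Bool}
    {t : Fin 3 → ℝ} :
    t ∈ Fam T i x σ ↔ reflAt j t ∈ Fam (reflAt j '' T) i (Function.update x j (-x j))
      (Function.update σ j (!σ j)) := by
  constructor
  · rintro ⟨htT, hcond⟩
    refine ⟨Set.mem_image_of_mem _ htT, ?_⟩
    intro l hl
    by_cases h : l = j
    · subst h
      simp only [Function.update_self, reflAt_same]
      have hc := hcond l hl
      cases hb : σ l
      · rw [hb, if_neg (by simp)] at hc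
        rw [if_pos (by simp [hb])]
        constructor <;> linarith [hc.1, hc.2]
      · rw [hb, if_pos rfl] at hc
        rw [if_neg (by simp [hb])]
        constructor <;> linarith [hc.1, hc.2]
    · rw [Function.update_of_ne h, Function.update_of_ne h, reflAt_ne h]
      exact hcond l hl
  · rintro ⟨htT', hcond⟩
    obtain ⟨u, huT, hu⟩ := htT'
    have hut : u = t := reflAt_inj j hu
    subst hut
    refine ⟨huT, ?_⟩
    intro l hl
    by_cases h : l = j
    · subst h
      have hc := hcond l hl
      simp only [Function.update_self, reflAt_same] at hc
      cases hb : σ l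
      · rw [if_pos (by simp [hb])] at hc
        rw [if_neg (by simp)]
        constructor <;> linarith [hc.1, hc.2]
      · rw [if_neg (by simp [hb])] at hc
        rw [if_pos rfl]
        constructor <;> linarith [hc.1, hc.2]
    · have := hcond l hl
      rw [Function.update_of_ne h, Function.update_of_ne h, reflAt_ne h] at this
      exact this

end Refl


section GK

/-- The package of structural facts about a line family. -/
def FamGood (T : Set (Fin 3 → ℝ)) (i : Fin 3) (x : Fin 3 → ℝ) (σ : Fin 3 → Bool) : Prop :=
  (∀ y : ℝ, ∃ t ∈ Fam T i x σ, t i ≤ y ∧ y < t i + 1) ∧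
  (∀ s ∈ Fam T i x σ, ∀ t ∈ Fam T i x σ, ∃ m : ℤ, t i = s i + m) ∧
  (∀ t ∈ Fam T i x σ, ∀ m : ℤ, ∃ u ∈ Fam T i x σ, u i = t i + m)

lemma famGood_aux : ∀ (n : ℕ) (T : Set (Fin 3 → ℝ)), IsCubeTiling T →
    ∀ (i : Fin 3) (x : Fin 3 → ℝ) (σ : Fin 3 → Bool),
    (Finset.univ.filter (fun j => j ≠ i ∧ σ j = false)).card ≤ n → FamGood T i x σ := by
  intro n
  induction n with
  | zero =>
    intro T hT i x σ hcard
    have hemp : (Finset.univ.filter (fun j => j ≠ i ∧ σ j = false)) = ∅ :=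
      Finset.card_eq_zero.mp (Nat.le_zero.mp hcard)
    have hσ : ∀ j, j ≠ i → σ j = true := by
      intro j hj
      by_contra hfalse
      have hjf : σ j = false := by
        cases hb : σ j
        · rfl
        · exact absurd hb hfalse
      have : j ∈ (Finset.univ.filter (fun j => j ≠ i ∧ σ j = false)) :=
        Finset.mem_filter.mpr ⟨Finset.mem_univ _, hj, hjf⟩
      rw [hemp] at this
      exact absurd this (Finset.notMem_empty _)
    exact ⟨allplus_cover hT hσ, fun s hs t ht => allplus_phase hT hσ hs ht,
      fun t ht m => allplus_corner hT hσ ht m⟩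
  | succ n ih =>
    intro T hT i x σ hcard
    by_cases hle : (Finset.univ.filter (fun j => j ≠ i ∧ σ j = false)).card ≤ n
    · exact ih T hT i x σ hle
    · push_neg at hle
      have hne : (Finset.univ.filter (fun j => j ≠ i ∧ σ j = false)).Nonempty := by
        rw [← Finset.card_pos]; omega
      obtain ⟨j₀, hj₀⟩ := hne
      rw [Finset.mem_filter] at hj₀
      obtain ⟨-, hj₀i, hj₀σ⟩ := hj₀
      set T' := reflAt j₀ '' T with hT'def
      have hT' : IsCubeTiling T' := tiling_reflAt hT j₀
      set x' := Function.update x j₀ (-x j₀) with hx'def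
      set σ' := Function.update σ j₀ (!σ j₀) with hσ'def
      have hcard' : (Finset.univ.filter (fun j => j ≠ i ∧ σ' j = false)).card ≤ n := by
        have hsub : (Finset.univ.filter (fun j => j ≠ i ∧ σ' j = false)) =
            (Finset.univ.filter (fun j => j ≠ i ∧ σ j = false)).erase j₀ := by
          ext j
          simp only [Finset.mem_filter, Finset.mem_erase, Finset.mem_univ, true_and]
          constructor
          · rintro ⟨hji, hjσ'⟩
            have hjj₀ : j ≠ j₀ := by
              intro h; subst h
              rw [hσ'def, Function.update_self, hj₀σ] at hjσ'
              simp at hjσ'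
            rw [hσ'def, Function.update_of_ne hjj₀] at hjσ'
            exact ⟨hjj₀, hji, hjσ'⟩
          · rintro ⟨hjj₀, hji, hjσ⟩
            rw [hσ'def, Function.update_of_ne hjj₀]
            exact ⟨hji, hjσ⟩
        rw [hsub]
        have hmem : j₀ ∈ (Finset.univ.filter (fun j => j ≠ i ∧ σ j = false)) :=
          Finset.mem_filter.mpr ⟨Finset.mem_univ _, hj₀i, hj₀σ⟩
        rw [Finset.card_erase_of_mem hmem]
        omega
      obtain ⟨hcov', hph', hcor'⟩ := ih T' hT' i x' σ' hcard'
      have hii : i ≠ j₀ := Ne.symm hj₀i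
      refine ⟨?_, ?_, ?_⟩
      · intro y
        obtain ⟨t', ht', hti⟩ := hcov' y
        have hmem : reflAt j₀ t' ∈ Fam T i x σ := by
          rw [mem_fam_reflAt hj₀i]
          rwa [reflAt_invol]
        exact ⟨reflAt j₀ t', hmem, by rwa [reflAt_ne hii]⟩
      · intro s hs t ht
        have hs' := (mem_fam_reflAt hj₀i).mp hs
        have ht' := (mem_fam_reflAt hj₀i).mp ht
        obtain ⟨m, hm⟩ := hph' _ hs' _ ht'
        rw [reflAt_ne hii, reflAt_ne hii] at hm
        exact ⟨m, hm⟩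
      · intro t ht m
        have ht' := (mem_fam_reflAt hj₀i).mp ht
        obtain ⟨u', hu', hui⟩ := hcor' _ ht' m
        have hmem : reflAt j₀ u' ∈ Fam T i x σ := by
          rw [mem_fam_reflAt hj₀i]
          rwa [reflAt_invol]
        refine ⟨reflAt j₀ u', hmem, ?_⟩
        rw [reflAt_ne hii, hui, reflAt_ne hii]

lemma fam_cover (hT : IsCubeTiling T) (i : Fin 3) (x : Fin 3 → ℝ) (σ : Fin 3 → Bool)
    (y : ℝ) : ∃ t ∈ Fam T i x σ, t i ≤ y ∧ y < t i + 1 :=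
  (famGood_aux 3 T hT i x σ (le_trans (Finset.card_filter_le _ _) (by simp))).1 y

lemma fam_phase (hT : IsCubeTiling T) {i : Fin 3} {x : Fin 3 → ℝ} {σ : Fin 3 → Bool}
    {s t : Fin 3 → ℝ} (hs : s ∈ Fam T i x σ) (ht : t ∈ Fam T i x σ) :
    ∃ m : ℤ, t i = s i + m :=
  (famGood_aux 3 T hT i x σ (le_trans (Finset.card_filter_le _ _) (by simp))).2.1 s hs t ht

lemma fam_corner (hT : IsCubeTiling T) {i : Fin 3} {x : Fin 3 → ℝ} {σ : Fin 3 → Bool}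
    {t : Fin 3 → ℝ} (ht : t ∈ Fam T i x σ) (m : ℤ) : ∃ u ∈ Fam T i x σ, u i = t i + m :=
  (famGood_aux 3 T hT i x σ (le_trans (Finset.card_filter_le _ _) (by simp))).2.2 t ht m

end GK


section Dich

lemma no_int_diff {a b : ℝ} (hclose : |b - a| < 1) (hne : b ≠ a) : ∀ m : ℤ, b ≠ a + m := by
  intro m hm
  have h1 : |(m : ℝ)| < 1 := by
    rw [hm] at hclose
    simpa using hclose
  have h3 : |m| < 1 := by exact_mod_cast h1
  have hm0 : m = 0 := Int.abs_lt_one_iff.mp h3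
  subst hm0
  simp at hm
  exact hne hm

lemma fam_dichotomy_plus (hT : IsCubeTiling T) {i k : Fin 3} (hki : k ≠ i)
    {x : Fin 3 → ℝ} {σ : Fin 3 → Bool} (hσk : σ k = true) {s t : Fin 3 → ℝ}
    (hs : s ∈ Fam T i x σ) (ht : t ∈ Fam T i x (Function.update σ k (!σ k)))
    (hmis : ∀ m : ℤ, t i ≠ s i + m) :
    ∀ u ∈ Fam T i x σ, u k = x k := by
  intro u hu
  by_contra hne
  have hcondk := hu.2 k hki
  rw [if_pos hσk] at hcondk
  have hflip : u ∈ Fam T i x (Function.update σ k (!σ k)) := by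
    refine ⟨hu.1, ?_⟩
    intro j hj
    by_cases hjk : j = k
    · subst hjk
      rw [Function.update_self, hσk]
      simp only [Bool.not_true]
      rw [if_neg (by simp)]
      exact ⟨lt_of_le_of_ne hcondk.1 hne, le_of_lt hcondk.2⟩
    · rw [Function.update_of_ne hjk]
      exact hu.2 j hj
  obtain ⟨m, hm⟩ := fam_phase hT ht hflip
  obtain ⟨m', hm'⟩ := fam_phase hT hs hu
  apply hmis (m' - m)
  rw [hm'] at hm
  push_cast
  linarith [hm]

lemma fam_dichotomy_minus (hT : IsCubeTiling T) {i k : Fin 3} (hki : k ≠ i)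
    {x : Fin 3 → ℝ} {σ : Fin 3 → Bool} (hσk : σ k = false) {s t : Fin 3 → ℝ}
    (hs : s ∈ Fam T i x σ) (ht : t ∈ Fam T i x (Function.update σ k (!σ k)))
    (hmis : ∀ m : ℤ, t i ≠ s i + m) :
    ∀ u ∈ Fam T i x σ, u k + 1 = x k := by
  intro u hu
  by_contra hne
  have hcondk := hu.2 k hki
  rw [if_neg (by simp [hσk])] at hcondk
  have hflip : u ∈ Fam T i x (Function.update σ k (!σ k)) := by
    refine ⟨hu.1, ?_⟩
    intro j hj
    by_cases hjk : j = k
    · subst hjk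
      rw [Function.update_self, hσk]
      simp only [Bool.not_false]
      simp only [if_true]
      exact ⟨le_of_lt hcondk.1, lt_of_le_of_ne hcondk.2 (fun h => hne h.symm)⟩
    · rw [Function.update_of_ne hjk]
      exact hu.2 j hj
  obtain ⟨m, hm⟩ := fam_phase hT ht hflip
  obtain ⟨m', hm'⟩ := fam_phase hT hs hu
  apply hmis (m' - m)
  rw [hm'] at hm
  push_cast
  linarith [hm]

lemma column_of (i j k : Fin 3) (hik : i ≠ k) (hjk : j ≠ k)
    (hcov : ∀ l, l = i ∨ l = j ∨ l = k) (t : Fin 3 → ℝ)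
    (H : ∀ m : ℤ, ∃ u ∈ T, u i = t i ∧ u j = t j ∧ u k = t k + m) :
    ∃ s : Fin 3 → ℝ, ∃ ι : Fin 3, ∀ m : ℤ,
      (s + (m : ℝ) • (Pi.single ι 1 : Fin 3 → ℝ)) ∈ T := by
  refine ⟨t, k, fun m => ?_⟩
  obtain ⟨u, huT, hui, huj, huk⟩ := H m
  have heq : t + (m : ℝ) • (Pi.single k 1 : Fin 3 → ℝ) = u := by
    funext l
    simp only [Pi.add_apply, Pi.smul_apply, smul_eq_mul]
    rcases hcov l with h | h | h <;> subst h
    · rw [Pi.single_eq_of_ne hik, hui]; ring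
    · rw [Pi.single_eq_of_ne hjk, huj]; ring
    · rw [Pi.single_eq_same, huk]; ring
  rw [heq]
  exact huT

end Dich


section Core

lemma int_chain {f : ℤ → ℝ} (h : ∀ m : ℤ, f m = f (m + 1)) : ∀ m : ℤ, f m = f 0 := by
  intro m
  induction m using Int.induction_on with
  | zero => rfl
  | succ n ih => rw [← h n]; exact ih
  | pred n ih =>
    have h2 := h (-(n : ℤ) - 1)
    have h3 : (-(n : ℤ) - 1 + 1) = -n := by ring
    rw [h3] at h2
    rw [h2]; exact ih

/-- The endgame: two tiles adjacent in direction `i`, with different `j`-corners and the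
same `k`-corner, force a column. -/
lemma core2 (hT : IsCubeTiling T) (i j k : Fin 3) (hij : i ≠ j) (hik : i ≠ k) (hjk : j ≠ k)
    (hcov : ∀ l, l = i ∨ l = j ∨ l = k) {V V' : Fin 3 → ℝ} (hVT : V ∈ T) (hV'T : V' ∈ T)
    (hadj : V' i = V i + 1) (hmisj : V j ≠ V' j) (hclosej : |V j - V' j| < 1)
    (heqk : V k = V' k) :
    ∃ s : Fin 3 → ℝ, ∃ ι : Fin 3, ∀ m : ℤ,
      (s + (m : ℝ) • (Pi.single ι 1 : Fin 3 → ℝ)) ∈ T := by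
  classical
  set xM : Fin 3 → ℝ := Function.update (Function.update (fun _ => 0) i (V' i)) k (V' k)
    with hxM
  have hxMi : xM i = V' i := by
    rw [hxM, Function.update_of_ne hik, Function.update_self]
  have hxMk : xM k = V' k := by rw [hxM, Function.update_self]
  set σt : Fin 3 → Bool := fun _ => true with hσt
  have hV'M : V' ∈ Fam T j xM σt := by
    refine ⟨hV'T, fun l hl => ?_⟩
    rw [if_pos rfl]
    rcases hcov l with h | h | h
    · subst h; rw [hxMi]; exact ⟨le_refl _, by linarith⟩
    · exact absurd h hl
    · subst h; rw [hxMk]; exact ⟨le_refl _, by linarith⟩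
  have hVM' : V ∈ Fam T j xM (Function.update σt i (!σt i)) := by
    refine ⟨hVT, fun l hl => ?_⟩
    by_cases hli : l = i
    · subst hli
      rw [Function.update_self]
      simp only [hσt, Bool.not_true]
      rw [if_neg (by simp)]
      rw [hxMi, hadj]
      exact ⟨by linarith, le_refl _⟩
    · rw [Function.update_of_ne hli, if_pos rfl]
      rcases hcov l with h | h | h
      · exact absurd h hli
      · exact absurd h hl
      · subst h; rw [hxMk, ← heqk]; exact ⟨le_refl _, by linarith⟩
  have hmisInt : ∀ m : ℤ, V j ≠ V' j + m := no_int_diff hclosej hmisj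
  have Mrigid : ∀ u ∈ Fam T j xM σt, u i = xM i :=
    fam_dichotomy_plus hT hij rfl hV'M hVM' hmisInt
  -- enumerate the members of M by their j-corners
  choose g hg1 hg2 using fun m : ℤ => fam_corner hT hV'M m
  by_cases hHyp : ∀ m : ℤ, g m k = g (m + 1) k
  · -- all k-corners agree: M itself is a column in direction j
    have hchain : ∀ m : ℤ, g m k = g 0 k := int_chain hHyp
    apply column_of i k j hij (Ne.symm hjk)
      (fun l => by rcases hcov l with h | h | h <;> tauto) (g 0)
    intro m
    refine ⟨g m, fam_subset (hg1 m), ?_, ?_, ?_⟩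
    · rw [Mrigid _ (hg1 m), Mrigid _ (hg1 0)]
    · exact hchain m
    · rw [hg2 m, hg2 0]; push_cast; ring
  · push_neg at hHyp
    obtain ⟨m₀, hm₀⟩ := hHyp
    have hPM := hg1 m₀
    have hQM := hg1 (m₀ + 1)
    set P := g m₀ with hP
    set Q := g (m₀ + 1) with hQ
    have hPj : P j = V' j + m₀ := hg2 m₀
    have hQj : Q j = V' j + (m₀ + 1 : ℤ) := hg2 (m₀ + 1)
    have hQPj : Q j = P j + 1 := by rw [hPj, hQj]; push_cast; ring
    have hPi : P i = V' i := by rw [Mrigid _ hPM, hxMi]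
    have hQi : Q i = V' i := by rw [Mrigid _ hQM, hxMi]
    have hPk : P k ≤ V' k ∧ V' k < P k + 1 := by
      have h := hPM.2 k (Ne.symm hjk)
      rwa [if_pos rfl, hxMk] at h
    have hQk : Q k ≤ V' k ∧ V' k < Q k + 1 := by
      have h := hQM.2 k (Ne.symm hjk)
      rwa [if_pos rfl, hxMk] at h
    -- the companion tile from the 1-minus family covering the j-value Q j
    obtain ⟨uh, huhM', huhj⟩ := fam_cover hT j xM (Function.update σt i (!σt i)) (Q j)
    have huhQ : uh j ≠ Q j := by
      intro heq
      obtain ⟨m₁, hm₁⟩ := fam_phase hT hVM' huhM'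
      apply hmisInt ((m₀ + 1) - m₁)
      rw [heq, hQj] at hm₁
      push_cast
      linarith [hm₁]
    have huhjlt : uh j < Q j := lt_of_le_of_ne huhj.1 huhQ
    have huhjgt : Q j < uh j + 1 := huhj.2
    have huhi : uh i < V' i ∧ V' i ≤ uh i + 1 := by
      have h := huhM'.2 i hij
      rw [Function.update_self] at h
      simp only [hσt, Bool.not_true] at h
      rw [if_neg (by simp), hxMi] at h
      exact h
    have huhk : uh k ≤ V' k ∧ V' k < uh k + 1 := by
      have h := huhM'.2 k (Ne.symm hjk)
      rw [Function.update_of_ne (Ne.symm hik), if_pos rfl, hxMk] at h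
      exact h
    have huhT : uh ∈ T := fam_subset huhM'
    -- the four stack families at the base point w
    set w : Fin 3 → ℝ := Function.update (Function.update (fun _ => 0) i (V' i)) j (Q j)
      with hw
    have hwi : w i = V' i := by
      rw [hw, Function.update_of_ne hij, Function.update_self]
    have hwj : w j = Q j := by rw [hw, Function.update_self]
    set σpp : Fin 3 → Bool := fun _ => true with hσpp
    set σpm : Fin 3 → Bool := Function.update σpp j (!σpp j) with hσpm
    have hσpmi : σpm i = true := by rw [hσpm, Function.update_of_ne hij]
    have hσpmj : σpm j = false := by
      rw [hσpm, Function.update_self]; simp [hσpp]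
    have hQpp : Q ∈ Fam T k w σpp := by
      refine ⟨fam_subset hQM, fun l hl => ?_⟩
      rw [if_pos rfl]
      rcases hcov l with h | h | h
      · subst h; rw [hwi, hQi]; exact ⟨le_refl _, by linarith⟩
      · subst h; rw [hwj]; exact ⟨le_refl _, by linarith⟩
      · exact absurd h hl
    have hPpm : P ∈ Fam T k w σpm := by
      refine ⟨fam_subset hPM, fun l hl => ?_⟩
      by_cases hlj : l = j
      · subst hlj
        rw [if_neg (by simp [hσpmj]), hwj, hQPj]
        exact ⟨by linarith, le_refl _⟩
      · rcases hcov l with h | h | h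
        · subst h
          rw [if_pos hσpmi, hwi, hPi]
          exact ⟨le_refl _, by linarith⟩
        · exact absurd h hlj
        · exact absurd h hl
    have huhmp : uh ∈ Fam T k w (Function.update σpp i (!σpp i)) := by
      refine ⟨huhT, fun l hl => ?_⟩
      by_cases hli : l = i
      · subst hli
        rw [Function.update_self]
        simp only [hσpp, Bool.not_true]
        rw [if_neg (by simp), hwi]
        exact huhi
      · rw [Function.update_of_ne hli, if_pos rfl]
        rcases hcov l with h | h | h
        · exact absurd h hli
        · subst h; rw [hwj]; exact ⟨le_of_lt huhjlt, huhjgt⟩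
        · exact absurd h hl
    have huhmm : uh ∈ Fam T k w (Function.update σpm i (!σpm i)) := by
      refine ⟨huhT, fun l hl => ?_⟩
      by_cases hli : l = i
      · subst hli
        rw [Function.update_self]
        simp only [hσpmi, Bool.not_true]
        rw [if_neg (by simp), hwi]
        exact huhi
      · rw [Function.update_of_ne hli]
        by_cases hlj : l = j
        · subst hlj
          rw [if_neg (by simp [hσpmj]), hwj]
          exact ⟨huhjlt, le_of_lt huhjgt⟩
        · rcases hcov l with h | h | h
          · exact absurd h hli
          · exact absurd h hlj
          · exact absurd h hl
    have hQper : Q ∈ Fam T k w (Function.update σpm j (!σpm j)) := by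
      refine ⟨fam_subset hQM, fun l hl => ?_⟩
      by_cases hlj : l = j
      · subst hlj
        rw [Function.update_self]
        simp only [hσpmj, Bool.not_false]
        simp only [if_true]
        rw [hwj]
        exact ⟨le_refl _, by linarith⟩
      · rw [Function.update_of_ne hlj]
        rcases hcov l with h | h | h
        · subst h; rw [if_pos hσpmi, hwi, hQi]; exact ⟨le_refl _, by linarith⟩
        · exact absurd h hlj
        · exact absurd h hl
    have hmisPQ : ∀ m : ℤ, P k ≠ Q k + m :=
      no_int_diff (by rw [abs_sub_lt_iff]; constructor <;> linarith [hPk.1, hPk.2, hQk.1, hQk.2])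
        hm₀
    have hmisQP : ∀ m : ℤ, Q k ≠ P k + m :=
      no_int_diff (by rw [abs_sub_lt_iff]; constructor <;> linarith [hPk.1, hPk.2, hQk.1, hQk.2])
        (Ne.symm hm₀)
    by_cases huhQk : uh k = Q k
    · -- Case B: the companion agrees with Q, so it disagrees with P
      have huhPk : uh k ≠ P k := by
        rw [huhQk]; exact fun h => hm₀ h.symm
      have hmisuhP : ∀ m : ℤ, uh k ≠ P k + m :=
        no_int_diff (by rw [abs_sub_lt_iff]; constructor <;> linarith [hPk.1, hPk.2, huhk.1, huhk.2]) huhPk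
      have rig_i : ∀ u ∈ Fam T k w σpm, u i = w i :=
        fam_dichotomy_plus hT hik hσpmi hPpm huhmm hmisuhP
      have rig_j : ∀ u ∈ Fam T k w σpm, u j + 1 = w j :=
        fam_dichotomy_minus hT hjk hσpmj hPpm hQper hmisQP
      apply column_of i j k hik hjk hcov P
      intro m
      obtain ⟨u, hu, huk⟩ := fam_corner hT hPpm m
      refine ⟨u, fam_subset hu, ?_, ?_, huk⟩
      · rw [rig_i _ hu, hwi, hPi]
      · have h1 := rig_j _ hu
        rw [hwj, hQPj] at h1
        linarith
    · -- Case A: the companion disagrees with Q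
      have hmisuhQ : ∀ m : ℤ, uh k ≠ Q k + m :=
        no_int_diff (by rw [abs_sub_lt_iff]; constructor <;> linarith [hQk.1, hQk.2, huhk.1, huhk.2]) huhQk
      have rig_i : ∀ u ∈ Fam T k w σpp, u i = w i :=
        fam_dichotomy_plus hT hik rfl hQpp huhmp hmisuhQ
      have rig_j : ∀ u ∈ Fam T k w σpp, u j = w j :=
        fam_dichotomy_plus hT hjk rfl hQpp hPpm hmisPQ
      apply column_of i j k hik hjk hcov Q
      intro m
      obtain ⟨u, hu, huk⟩ := fam_corner hT hQpp m
      refine ⟨u, fam_subset hu, ?_, ?_, huk⟩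
      · rw [rig_i _ hu, hwi, hQi]
      · rw [rig_j _ hu, hwj]

end Core


section Core1

lemma core1 (hT : IsCubeTiling T) (i j k : Fin 3) (hij : i ≠ j) (hik : i ≠ k) (hjk : j ≠ k)
    (hcov : ∀ l, l = i ∨ l = j ∨ l = k) {A B : Fin 3 → ℝ} (hAT : A ∈ T) (hBT : B ∈ T)
    (hadj : B k = A k + 1) (hmisi : A i ≠ B i) (hclosei : |A i - B i| < 1)
    (hclosej : |A j - B j| < 1) :
    ∃ s : Fin 3 → ℝ, ∃ ι : Fin 3, ∀ m : ℤ,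
      (s + (m : ℝ) • (Pi.single ι 1 : Fin 3 → ℝ)) ∈ T := by
  classical
  have habs_i := abs_sub_lt_iff.mp hclosei
  have habs_j := abs_sub_lt_iff.mp hclosej
  set xL : Fin 3 → ℝ :=
    Function.update (Function.update (fun _ => 0) j (max (A j) (B j))) k (B k) with hxL
  have hxLj : xL j = max (A j) (B j) := by
    rw [hxL, Function.update_of_ne hjk, Function.update_self]
  have hxLk : xL k = B k := by rw [hxL, Function.update_self]
  set σt : Fin 3 → Bool := fun _ => true with hσt
  have hBL : B ∈ Fam T i xL σt := by
    refine ⟨hBT, fun l hl => ?_⟩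
    rw [if_pos rfl]
    rcases hcov l with h | h | h
    · exact absurd h hl
    · subst h
      rw [hxLj]
      exact ⟨le_max_right _ _, max_lt (by linarith) (by linarith)⟩
    · subst h
      rw [hxLk]
      exact ⟨le_refl _, by linarith⟩
  have hAL' : A ∈ Fam T i xL (Function.update σt k (!σt k)) := by
    refine ⟨hAT, fun l hl => ?_⟩
    by_cases hlk : l = k
    · subst hlk
      rw [Function.update_self]
      simp only [hσt, Bool.not_true]
      rw [if_neg (by simp), hxLk, hadj]
      exact ⟨by linarith, le_refl _⟩
    · rw [Function.update_of_ne hlk, if_pos rfl]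
      rcases hcov l with h | h | h
      · exact absurd h hl
      · subst h
        rw [hxLj]
        exact ⟨le_max_left _ _, max_lt (by linarith) (by linarith)⟩
      · exact absurd h hlk
  have hmisInt : ∀ m : ℤ, A i ≠ B i + m := no_int_diff hclosei hmisi
  have Lrigid : ∀ u ∈ Fam T i xL σt, u k = xL k :=
    fam_dichotomy_plus hT (Ne.symm hik) rfl hBL hAL' hmisInt
  choose g hg1 hg2 using fun m : ℤ => fam_corner hT hBL m
  by_cases hHyp : ∀ m : ℤ, g m j = g (m + 1) j
  · have hchain : ∀ m : ℤ, g m j = g 0 j := int_chain hHyp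
    apply column_of j k i (Ne.symm hij) (Ne.symm hik)
      (fun l => by rcases hcov l with h | h | h <;> tauto) (g 0)
    intro m
    refine ⟨g m, fam_subset (hg1 m), hchain m, ?_, ?_⟩
    · rw [Lrigid _ (hg1 m), Lrigid _ (hg1 0)]
    · rw [hg2 m, hg2 0]; push_cast; ring
  · push_neg at hHyp
    obtain ⟨m₀, hm₀⟩ := hHyp
    have hVM := hg1 m₀
    have hV'M := hg1 (m₀ + 1)
    set V := g m₀ with hV
    set V' := g (m₀ + 1) with hV'
    have hadj' : V' i = V i + 1 := by
      rw [hV, hV', hg2 m₀, hg2 (m₀ + 1)]; push_cast; ring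
    have hVj : V j ≤ max (A j) (B j) ∧ max (A j) (B j) < V j + 1 := by
      have h := hVM.2 j (Ne.symm hij)
      rwa [if_pos rfl, hxLj] at h
    have hV'j : V' j ≤ max (A j) (B j) ∧ max (A j) (B j) < V' j + 1 := by
      have h := hV'M.2 j (Ne.symm hij)
      rwa [if_pos rfl, hxLj] at h
    have hclose' : |V j - V' j| < 1 := by
      rw [abs_sub_lt_iff]
      constructor <;> linarith [hVj.1, hVj.2, hV'j.1, hV'j.2]
    have heqk' : V k = V' k := by
      rw [Lrigid _ hVM, Lrigid _ hV'M]
    exact core2 hT i j k hij hik hjk hcov (fam_subset hVM) (fam_subset hV'M)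
      hadj' hm₀ hclose' heqk'

end Core1


lemma main_column (hT : IsCubeTiling T) :
    ∃ s : Fin 3 → ℝ, ∃ ι : Fin 3, ∀ m : ℤ,
      (s + (m : ℝ) • (Pi.single ι 1 : Fin 3 → ℝ)) ∈ T := by
  classical
  have hcov : ∀ l : Fin 3, l = 0 ∨ l = 1 ∨ l = 2 := by decide
  set x0 : Fin 3 → ℝ := fun _ => 0 with hx0
  set σt : Fin 3 → Bool := fun _ => true with hσt
  obtain ⟨t₀, ht₀, -⟩ := fam_cover hT 2 x0 σt 0
  choose g hg1 hg2 using fun m : ℤ => fam_corner hT ht₀ m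
  by_cases hHyp : ∀ m : ℤ, g m 0 = g (m + 1) 0 ∧ g m 1 = g (m + 1) 1
  · have hchain0 : ∀ m : ℤ, g m 0 = g 0 0 := int_chain fun m => (hHyp m).1
    have hchain1 : ∀ m : ℤ, g m 1 = g 0 1 := int_chain fun m => (hHyp m).2
    apply column_of 0 1 2 (by decide) (by decide) hcov (g 0)
    intro m
    refine ⟨g m, fam_subset (hg1 m), hchain0 m, hchain1 m, ?_⟩
    rw [hg2 m, hg2 0]; push_cast; ring
  · push_neg at hHyp
    obtain ⟨m₀, hm₀⟩ := hHyp
    have hA := hg1 m₀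
    have hB := hg1 (m₀ + 1)
    have hadj : g (m₀ + 1) 2 = g m₀ 2 + 1 := by
      rw [hg2 m₀, hg2 (m₀ + 1)]; push_cast; ring
    have hclose : ∀ l : Fin 3, l ≠ 2 → |g m₀ l - g (m₀ + 1) l| < 1 := by
      intro l hl
      have h1 := hA.2 l hl
      have h2 := hB.2 l hl
      rw [if_pos rfl] at h1 h2
      rw [abs_sub_lt_iff]
      constructor <;> linarith [h1.1, h1.2, h2.1, h2.2]
    rcases Classical.em (g m₀ 0 = g (m₀ + 1) 0) with he | h
    · have h := hm₀ he
      exact core1 hT 1 0 2 (by decide) (by decide) (by decide)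
        (fun l => by rcases hcov l with hh | hh | hh <;> tauto)
        (fam_subset hA) (fam_subset hB) hadj h
        (hclose 1 (by decide)) (hclose 0 (by decide))
    · exact core1 hT 0 1 2 (by decide) (by decide) (by decide) hcov
        (fam_subset hA) (fam_subset hB) hadj h
        (hclose 0 (by decide)) (hclose 1 (by decide))

end ColAux

/-- Every cube tiling of ℝ^3 contains a column. -/
theorem cube_tiling_dim3_contains_column (T : Set (Fin 3 → ℝ)) (hT : IsCubeTiling T) :
    ∃ s : Fin 3 → ℝ, ∃ i : Fin 3, ∀ k : ℤ, (s + (k : ℝ) • (Pi.single i 1 : Fin 3 → ℝ)) ∈ T :=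
  ColAux.main_column hT
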